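/- Let X be a Banach space and f : X → ℝ ∪ {+∞} proper, convex, lower semicontinuous. Then the subdifferential ∂f is a maximal monotone operator from X to X*: if (y, q) ∈ X × X* satisfies (p − q)(x − y) ≥ 0 for all x ∈ X and p ∈ ∂f(x), then q ∈ ∂f(y). -/

import Mathlib

open Set

variable {X : Type*} [NormedAddCommGroup X] [NormedSpace ℝ X] [CompleteSpace X]

/-- The convex subdifferential of an extended-real-valued function. -/
def Subdiff (f : X → EReal) (x : X) : Set (X →L[ℝ] ℝ) :=
  {p | ∀ y : X, f x + ((p (y - x) : ℝ) : EReal) ≤ f y}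

/-- The ε-subdifferential. -/
def EpsSubdiff (f : X → EReal) (ε : ℝ) (x : X) : Set (X →L[ℝ] ℝ) :=
  {p | ∀ y : X, f x + ((p (y - x) - ε : ℝ) : EReal) ≤ f y}

/-- f is proper: never -∞ and not identically +∞. -/
def EProper (f : X → EReal) : Prop := (∃ x, f x ≠ ⊤) ∧ ∀ x, f x ≠ ⊥

/-- Convexity of an extended-real-valued function. -/
def EConvex (f : X → EReal) : Prop :=
  ∀ x y : X, ∀ t : ℝ, 0 ≤ t → t ≤ 1 →
    f (t • x + (1 - t) • y) ≤ ((t : ℝ) : EReal) * f x + (((1 - t : ℝ)) : EReal) * f y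

open Filter Topology

section Helpers

theorem ekeland_real {Y : Type*} [MetricSpace Y] [CompleteSpace Y]
    {ψ : Y → ℝ} (hlsc : LowerSemicontinuous ψ) {m : ℝ} (hb : ∀ x, m ≤ ψ x)
    {lam : ℝ} (hlam : 0 < lam) (x₀ : Y) :
    ∃ v, ψ v ≤ ψ x₀ ∧ ∀ x, ψ v ≤ ψ x + lam * dist x v := by
  set S : Y → Set Y := fun x => {z | ψ z + lam * dist z x ≤ ψ x} with hS
  have hmem : ∀ x, x ∈ S x := by intro x; simp [hS]
  have htrans : ∀ {x z}, z ∈ S x → S z ⊆ S x := by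
    intro x z hz w hw
    have h1 : ψ w + lam * dist w z ≤ ψ z := hw
    have h2 : ψ z + lam * dist z x ≤ ψ x := hz
    have h3 : dist w x ≤ dist w z + dist z x := dist_triangle _ _ _
    have : lam * dist w x ≤ lam * (dist w z + dist z x) :=
      mul_le_mul_of_nonneg_left h3 hlam.le
    simp only [hS, mem_setOf_eq]
    nlinarith
  have hchoice : ∀ (n : ℕ) (x : Y), ∃ z, z ∈ S x ∧ ∀ w ∈ S x, ψ z ≤ ψ w + (1/2 : ℝ)^n := by
    intro n x
    have hne : (ψ '' S x).Nonempty := ⟨ψ x, x, hmem x, rfl⟩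
    have hbdd : BddBelow (ψ '' S x) := ⟨m, by rintro _ ⟨z, -, rfl⟩; exact hb z⟩
    have hlt : sInf (ψ '' S x) < sInf (ψ '' S x) + (1/2:ℝ)^n := by
      have : (0:ℝ) < (1/2:ℝ)^n := by positivity
      linarith
    obtain ⟨_, ⟨z, hzS, rfl⟩, hz⟩ := exists_lt_of_csInf_lt (hne) hlt
    exact ⟨z, hzS, fun w hw => le_trans hz.le (by
      have := csInf_le hbdd ⟨w, hw, rfl⟩; linarith)⟩
  -- build sequence
  let u : ℕ → Y := fun n => Nat.rec x₀ (fun n x => (hchoice n x).choose) n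
  have hu0 : u 0 = x₀ := rfl
  have husucc : ∀ n, u (n+1) = (hchoice n (u n)).choose := fun n => rfl
  have hstep : ∀ n, u (n+1) ∈ S (u n) := fun n => (hchoice n (u n)).choose_spec.1
  have hnear : ∀ n, ∀ w ∈ S (u n), ψ (u (n+1)) ≤ ψ w + (1/2:ℝ)^n :=
    fun n => (hchoice n (u n)).choose_spec.2
  have hchain : ∀ n k, u (n + k) ∈ S (u n) := by
    intro n k
    induction k with
    | zero => exact hmem _
    | succ k ih => exact htrans ih (hstep (n+k))
  have hmono : ∀ n k, n ≤ k → u k ∈ S (u n) := by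
    intro n k hnk
    obtain ⟨j, rfl⟩ := Nat.exists_eq_add_of_le hnk
    exact hchain n j
  have hanti : Antitone fun n => ψ (u n) := by
    apply antitone_nat_of_succ_le
    intro n
    have := hstep n
    simp only [hS, mem_setOf_eq] at this
    have hd : 0 ≤ lam * dist (u (n+1)) (u n) := by positivity
    linarith
  have hbddb : BddBelow (range fun n => ψ (u n)) := ⟨m, by rintro _ ⟨n, rfl⟩; exact hb _⟩
  set L := ⨅ n, ψ (u n) with hL
  have hLle : ∀ n, L ≤ ψ (u n) := fun n => ciInf_le hbddb n
  have htend : Tendsto (fun n => ψ (u n)) atTop (𝓝 L) := tendsto_atTop_ciInf hanti hbddb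
  -- Cauchy
  have hdistb : ∀ n k, n ≤ k → dist (u n) (u k) ≤ (ψ (u n) - L) / lam := by
    intro n k hnk
    have := hmono n k hnk
    simp only [hS, mem_setOf_eq] at this
    rw [dist_comm]
    rw [le_div_iff₀ hlam, mul_comm]
    have := hLle k
    linarith
  have hcauchy : CauchySeq u := by
    apply cauchySeq_of_le_tendsto_0' (fun n => (ψ (u n) - L) / lam) hdistb
    have : Tendsto (fun n => ψ (u n) - L) atTop (𝓝 0) := by
      simpa using htend.sub (tendsto_const_nhds (x := L))
    simpa using this.div_const lam
  obtain ⟨v, hv⟩ := cauchySeq_tendsto_of_complete hcauchy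
  -- ψ v ≤ L
  have hψv : ψ v ≤ L := by
    by_contra h
    push_neg at h
    obtain ⟨c, hc1, hc2⟩ := exists_between h
    have hev : ∀ᶠ n in atTop, c ≤ ψ (u n) := (hv.eventually (hlsc v c hc2)).mono fun n h => h.le
    exact absurd (ge_of_tendsto htend hev) (not_le.2 hc1)
  -- v ∈ S (u n) for all n
  have hvS : ∀ n, v ∈ S (u n) := by
    intro n
    have hkey : ∀ k, n ≤ k → ψ (u k) + lam * dist (u k) (u n) ≤ ψ (u n) := by
      intro k hk; exact hmono n k hk
    have h1 : Tendsto (fun k => ψ (u k) + lam * dist (u k) (u n)) atTop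
        (𝓝 (L + lam * dist v (u n))) := by
      exact htend.add (tendsto_const_nhds.mul (hv.dist tendsto_const_nhds))
    have h2 : L + lam * dist v (u n) ≤ ψ (u n) :=
      le_of_tendsto h1 (eventually_atTop.2 ⟨n, hkey⟩)
    have : ψ v + lam * dist v (u n) ≤ L + lam * dist v (u n) := by linarith
    exact this.trans h2
  refine ⟨v, ?_, ?_⟩
  · have := hvS 0
    simp only [hS, mem_setOf_eq, hu0] at this
    have hd : 0 ≤ lam * dist v x₀ := by positivity
    linarith
  · intro x
    by_contra hcon
    push_neg at hcon
    have hxSv : x ∈ S v := by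
      simp only [hS, mem_setOf_eq]
      linarith [hcon.le]
    have hxS : ∀ n, x ∈ S (u n) := fun n => htrans (hvS n) hxSv
    have hub : ∀ n : ℕ, ψ v ≤ ψ x + (1/2:ℝ)^n := by
      intro n
      have h1 := hnear n x (hxS n)
      have h2 := hLle (n+1)
      linarith
    have hψvx : ψ v ≤ ψ x := by
      have ht2 : Tendsto (fun n : ℕ => ψ x + (1/2:ℝ)^n) atTop (𝓝 (ψ x + 0)) :=
        tendsto_const_nhds.add (tendsto_pow_atTop_nhds_zero_of_lt_one (by norm_num) (by norm_num))
      have := ge_of_tendsto ht2 (Filter.Eventually.of_forall hub)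
      simpa using this
    have hd : 0 ≤ lam * dist x v := by positivity
    linarith


theorem ekeland_ereal {Y : Type*} [MetricSpace Y] [CompleteSpace Y]
    {φ : Y → EReal} (hlsc : LowerSemicontinuous φ) {m : ℝ} (hb : ∀ x, (m : EReal) ≤ φ x)
    {lam : ℝ} (hlam : 0 < lam) (x₀ : Y) (hx₀ : φ x₀ ≠ ⊤) :
    ∃ v, φ v ≤ φ x₀ ∧ φ v ≠ ⊤ ∧ ∀ x, φ v ≤ φ x + ((lam * dist x v : ℝ) : EReal) := by
  have hbot : ∀ x, φ x ≠ ⊥ := fun x h => by simpa [h] using hb x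
  set C : ℝ := (φ x₀).toReal + 1 with hC
  have hφx₀ : φ x₀ = ((φ x₀).toReal : EReal) := (EReal.coe_toReal hx₀ (hbot x₀)).symm
  set m' : ℝ := min m C with hm'
  have hminne : ∀ x, min (φ x) (C : EReal) ≠ ⊤ :=
    fun x => ne_top_of_le_ne_top (EReal.coe_ne_top C) (min_le_right _ _)
  have hminnb : ∀ x, min (φ x) (C : EReal) ≠ ⊥ := by
    intro x
    have : (m' : EReal) ≤ min (φ x) C :=
      le_min ((EReal.coe_le_coe_iff.2 (min_le_left _ _)).trans (hb x))
        (EReal.coe_le_coe_iff.2 (min_le_right _ _))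
    exact fun h => by simpa [h] using this
  set ψ : Y → ℝ := fun x => (min (φ x) (C : EReal)).toReal with hψ
  have hψcoe : ∀ x, (ψ x : EReal) = min (φ x) (C : EReal) :=
    fun x => EReal.coe_toReal (hminne x) (hminnb x)
  have hψb : ∀ x, m' ≤ ψ x := by
    intro x
    rw [← EReal.coe_le_coe_iff, hψcoe]
    exact le_min ((EReal.coe_le_coe_iff.2 (min_le_left _ _)).trans (hb x))
      (EReal.coe_le_coe_iff.2 (min_le_right _ _))
  have hψlsc : LowerSemicontinuous ψ := by
    intro x c hc
    have h1 : (c : EReal) < min (φ x) (C : EReal) := by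
      rw [← hψcoe x]; exact_mod_cast hc
    have h2 : (c : EReal) < φ x := h1.trans_le (min_le_left _ _)
    have h3 : c < C := by
      have := h1.trans_le (min_le_right _ _); exact_mod_cast this
    filter_upwards [hlsc x (c : EReal) h2] with x' hx'
    rw [gt_iff_lt, ← EReal.coe_lt_coe_iff, hψcoe]
    exact lt_min hx' (by exact_mod_cast h3)
  obtain ⟨v, hv1, hv2⟩ := ekeland_real hψlsc hψb hlam x₀
  have hψx₀ : ψ x₀ = (φ x₀).toReal := by
    have : min (φ x₀) (C : EReal) = φ x₀ := by
      apply min_eq_left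
      rw [hφx₀]
      exact_mod_cast (by linarith : (φ x₀).toReal ≤ C)
    simp [hψ, this]
  have hφvC : φ v < (C : EReal) := by
    by_contra h
    push_neg at h
    have : ψ v = C := by
      have : min (φ v) (C : EReal) = C := min_eq_right h
      simp [hψ, this]
    rw [this, hψx₀] at hv1
    linarith
  have hφv : (ψ v : EReal) = φ v := by rw [hψcoe]; exact min_eq_left hφvC.le
  refine ⟨v, ?_, ?_, ?_⟩
  · rw [← hφv, hφx₀, ← hψx₀]; exact_mod_cast hv1
  · rw [← hφv]; exact EReal.coe_ne_top _
  · intro x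
    calc φ v = (ψ v : EReal) := hφv.symm
    _ ≤ ((ψ x + lam * dist x v : ℝ) : EReal) := by exact_mod_cast hv2 x
    _ = (ψ x : EReal) + ((lam * dist x v : ℝ) : EReal) := by rw [EReal.coe_add]
    _ ≤ φ x + ((lam * dist x v : ℝ) : EReal) := by
        apply add_le_add_left
        rw [hψcoe]; exact min_le_left _ _


theorem lsc_add_cont {Y : Type*} [MetricSpace Y] {f : Y → EReal} (hlsc : LowerSemicontinuous f)
    {h : Y → ℝ} (hc : Continuous h) :
    LowerSemicontinuous (fun x => f x + ((h x : ℝ) : EReal)) := by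
  intro x b hb
  change b < f x + ((h x : ℝ) : EReal) at hb
  -- find real c < f x and δ > 0 with b < c + h x - ... strictly
  have hclaim : ∃ c : ℝ, (c : EReal) < f x ∧ b < ((c + h x : ℝ) : EReal) := by
    by_cases hfx : f x = ⊤
    · have hbt : b ≠ ⊤ := fun hbt => not_top_lt (hbt ▸ hb)
      rcases eq_or_ne b ⊥ with hbb | hbb
      · exact ⟨0, by rw [hfx]; exact EReal.coe_lt_top 0, by rw [hbb]; exact EReal.bot_lt_coe _⟩
      · have hbr : b = ((b.toReal : ℝ) : EReal) := (EReal.coe_toReal hbt hbb).symm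
        refine ⟨b.toReal - h x + 1, ?_, ?_⟩
        · rw [hfx]; exact EReal.coe_lt_top _
        · rw [hbr]; exact_mod_cast (by linarith : b.toReal < b.toReal - h x + 1 + h x)
    · have hfb : f x ≠ ⊥ := by
        intro hbot
        rw [hbot] at hb
        simp at hb
      have hfr : f x = ((f x).toReal : EReal) := (EReal.coe_toReal hfx hfb).symm
      set s : ℝ := (f x).toReal
      have hb' : b < ((s + h x : ℝ) : EReal) := by
        rw [hfr] at hb
        calc b < (s : EReal) + ((h x : ℝ) : EReal) := hb
        _ = ((s + h x : ℝ) : EReal) := by norm_cast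
      rcases eq_or_ne b ⊥ with hbb | hbb
      · exact ⟨s - 1, by rw [hfr]; exact_mod_cast (by linarith : s - 1 < s), by rw [hbb]; exact EReal.bot_lt_coe _⟩
      · have hbt : b ≠ ⊤ := ne_top_of_lt hb'
        have hbr : b = ((b.toReal : ℝ) : EReal) := (EReal.coe_toReal hbt hbb).symm
        have h1 : b.toReal < s + h x := by rw [hbr] at hb'; exact_mod_cast hb'
        refine ⟨(b.toReal - h x + s)/2, ?_, ?_⟩
        · rw [hfr]; exact_mod_cast (by linarith : (b.toReal - h x + s)/2 < s)
        · rw [hbr]; exact_mod_cast (by linarith : b.toReal < (b.toReal - h x + s)/2 + h x)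
  obtain ⟨c, hc1, hc2⟩ := hclaim
  -- slack δ
  have hδ : ∃ δ : ℝ, 0 < δ ∧ b ≤ ((c + h x - δ : ℝ) : EReal) := by
    rcases eq_or_ne b ⊥ with hbb | hbb
    · exact ⟨1, one_pos, by rw [hbb]; exact bot_le⟩
    · have hbt : b ≠ ⊤ := ne_top_of_lt hc2
      have hbr : b = ((b.toReal : ℝ) : EReal) := (EReal.coe_toReal hbt hbb).symm
      have h1 : b.toReal < c + h x := by rw [hbr] at hc2; exact_mod_cast hc2
      exact ⟨(c + h x - b.toReal)/2, by linarith, by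
        rw [hbr]; exact_mod_cast (by linarith : b.toReal ≤ c + h x - (c + h x - b.toReal)/2)⟩
  obtain ⟨δ, hδ0, hδle⟩ := hδ
  have hev1 : ∀ᶠ x' in 𝓝 x, (c : EReal) < f x' := hlsc x _ hc1
  have hev2 : ∀ᶠ x' in 𝓝 x, h x - δ < h x' := by
    have : ∀ᶠ x' in 𝓝 x, h x' ∈ Ioi (h x - δ) :=
      hc.continuousAt.preimage_mem_nhds (Ioi_mem_nhds (by linarith))
    exact this
  filter_upwards [hev1, hev2] with x' h1 h2
  calc b ≤ ((c + h x - δ : ℝ) : EReal) := hδle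
  _ < ((c + h x' : ℝ) : EReal) := by exact_mod_cast (by linarith : c + h x - δ < c + h x')
  _ = (c : EReal) + ((h x' : ℝ) : EReal) := by norm_cast
  _ < f x' + ((h x' : ℝ) : EReal) := EReal.add_lt_add_right_coe h1 _


theorem epi_convex {f : X → EReal} (hconv : EConvex f) :
    Convex ℝ {p : X × ℝ | f p.1 ≤ (p.2 : EReal)} := by
  rintro ⟨x, r⟩ hx ⟨x', r'⟩ hx' a b ha hb hab
  simp only [mem_setOf_eq] at hx hx' ⊢
  have hb' : b = 1 - a := by linarith
  subst hb'
  have h1 := hconv x x' a ha (by linarith)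
  refine h1.trans ?_
  have h2 : ((a : ℝ) : EReal) * f x ≤ ((a : ℝ) : EReal) * (r : EReal) :=
    mul_le_mul_of_nonneg_left hx (by exact_mod_cast ha)
  have h3 : ((1 - a : ℝ) : EReal) * f x' ≤ ((1 - a : ℝ) : EReal) * (r' : EReal) :=
    mul_le_mul_of_nonneg_left hx' (by exact_mod_cast hb)
  calc ((a : ℝ) : EReal) * f x + ((1 - a : ℝ) : EReal) * f x'
      ≤ ((a : ℝ) : EReal) * (r : EReal) + ((1 - a : ℝ) : EReal) * (r' : EReal) :=
        add_le_add h2 h3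
    _ = (((a • (x, r) + (1 - a) • (x', r')) : X × ℝ).2 : EReal) := by
        have hsnd : ((a • (x, r) + (1 - a) • (x', r')) : X × ℝ).2 = a * r + (1 - a) * r' := by
          simp [smul_eq_mul]
        rw [hsnd]
        norm_cast

theorem epi_closed {f : X → EReal} (hlsc : LowerSemicontinuous f) :
    IsClosed {p : X × ℝ | f p.1 ≤ (p.2 : EReal)} := by
  rw [← isOpen_compl_iff]
  rw [isOpen_iff_mem_nhds]
  rintro ⟨x, r⟩ hp
  simp only [mem_compl_iff, mem_setOf_eq, not_le] at hp
  obtain ⟨c, hc1, hc2⟩ := EReal.exists_between_coe_real hp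
  have hev : ∀ᶠ x' in 𝓝 x, (c : EReal) < f x' := hlsc x _ hc2
  have hrc : r < c := by exact_mod_cast hc1
  have : {p : X × ℝ | (c : EReal) < f p.1 ∧ p.2 < c} ∈ 𝓝 (x, r) := by
    rw [nhds_prod_eq]
    exact Filter.prod_mem_prod hev (Iio_mem_nhds hrc)
  refine Filter.mem_of_superset this ?_
  rintro ⟨x', r'⟩ ⟨h1, h2⟩
  simp only [mem_compl_iff, mem_setOf_eq, not_le]
  exact lt_trans (by exact_mod_cast h2) h1

theorem exists_affine_minorant {f : X → EReal} (hnetop : ∃ x, f x ≠ ⊤)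
    (hnb : ∀ x, f x ≠ ⊥) (hconv : EConvex f) (hlsc : LowerSemicontinuous f) :
    ∃ (l : X →L[ℝ] ℝ) (c : ℝ), ∀ x, ((l x + c : ℝ) : EReal) ≤ f x := by
  obtain ⟨x₁, hx₁⟩ := hnetop
  set r₁ : ℝ := (f x₁).toReal with hr₁
  have hfx₁ : f x₁ = (r₁ : EReal) := (EReal.coe_toReal hx₁ (hnb x₁)).symm
  have hpt : ((x₁, r₁ - 1) : X × ℝ) ∉ {p : X × ℝ | f p.1 ≤ (p.2 : EReal)} := by
    simp only [mem_setOf_eq, not_le, hfx₁]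
    exact_mod_cast (by linarith : r₁ - 1 < r₁)
  obtain ⟨F, u, hFs, hFpt⟩ :=
    geometric_hahn_banach_closed_point (epi_convex hconv) (epi_closed hlsc) hpt
  set l : X →L[ℝ] ℝ := F.comp (ContinuousLinearMap.inl ℝ X ℝ) with hl
  set c : ℝ := F (0, 1) with hc
  have hF : ∀ (x : X) (r : ℝ), F (x, r) = l x + r * c := by
    intro x r
    have : ((x, r) : X × ℝ) = (x, (0:ℝ)) + r • ((0:X), (1:ℝ)) := by simp
    rw [this, map_add, map_smul, smul_eq_mul]; rfl
  have hepi : ∀ (x : X) (r : ℝ), f x ≤ (r : EReal) → l x + r * c < u := by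
    intro x r hr; have := hFs (x, r) hr; rwa [hF] at this
  have hcle : c ≤ 0 := by
    by_contra hcpos
    push_neg at hcpos
    have hbig : ∀ t : ℝ, r₁ ≤ t → l x₁ + t * c < u := by
      intro t ht
      exact hepi x₁ t (hfx₁ ▸ (by exact_mod_cast ht))
    have := hbig (max r₁ ((u - l x₁) / c)) (le_max_left _ _)
    have h2 : (u - l x₁) / c ≤ max r₁ ((u - l x₁) / c) := le_max_right _ _
    rw [div_le_iff₀ hcpos] at h2
    linarith
  have hcne : c < 0 := by
    rcases hcle.lt_or_eq with h | h
    · exact h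
    · exfalso
      have h1 := hepi x₁ r₁ (le_of_eq hfx₁)
      rw [hF] at hFpt
      rw [h] at h1 hFpt
      simp at h1 hFpt
      linarith
  refine ⟨(-c⁻¹) • l, u / c, fun x => ?_⟩
  by_cases hfx : f x = ⊤
  · simp [hfx]
  · have hfr : f x = ((f x).toReal : EReal) := (EReal.coe_toReal hfx (hnb x)).symm
    set r : ℝ := (f x).toReal
    have h1 : l x + r * c < u := hepi x r (le_of_eq hfr)
    have hc' : c ≠ 0 := ne_of_lt hcne
    have hd : (0:ℝ) < -c := by linarith
    have key : (-c⁻¹ * l x + u / c) * (-c) = l x - u := by field_simp; ring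
    have hlt : (-c⁻¹ * l x + u / c) * (-c) < r * (-c) := by rw [key]; nlinarith [h1]
    have h2 : -c⁻¹ * l x + u / c ≤ r := le_of_lt (lt_of_mul_lt_mul_right hlt hd.le)
    rw [hfr]
    have h3 : ((-c⁻¹) • l) x + u / c ≤ r := by simpa [smul_eq_mul] using h2
    exact_mod_cast h3


theorem sandwich_subgradient {f : X → EReal}
    (hA : Convex ℝ {p : X × ℝ | f p.1 ≤ (p.2 : EReal)}) (hnb : ∀ x, f x ≠ ⊥)
    {h : X → ℝ} (hh : ConvexOn ℝ univ h) (hhc : Continuous h)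
    {w : X} {r₀ : ℝ} (hw : f w = (r₀ : EReal))
    (hmin : ∀ x, ((r₀ + h w : ℝ) : EReal) ≤ f x + ((h x : ℝ) : EReal)) :
    ∃ p : X →L[ℝ] ℝ,
      (∀ x, ((r₀ + p (x - w) : ℝ) : EReal) ≤ f x) ∧ (∀ x, h w - p (x - w) ≤ h x) := by
  set k : X → ℝ := fun x => r₀ + h w - h x with hk
  have hkc : Continuous k := by fun_prop
  have hkconc : ConcaveOn ℝ univ k := by
    have h1 : ConcaveOn ℝ univ (-h) := hh.neg
    have : ConcaveOn ℝ univ ((-h) + fun _ => r₀ + h w) := h1.add_const _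
    convert this using 1
    ext x; simp [hk]; ring
  -- k ≤ f pointwise (as ERreals)
  have hklef : ∀ x, ((k x : ℝ) : EReal) ≤ f x := by
    intro x
    by_cases hfx : f x = ⊤
    · simp [hfx]
    · have hfr : f x = ((f x).toReal : EReal) := (EReal.coe_toReal hfx (hnb x)).symm
      set s : ℝ := (f x).toReal
      have := hmin x
      rw [hfr] at this ⊢
      have h2 : (r₀ + h w : ℝ) ≤ s + h x := by exact_mod_cast this
      have h3 : k x ≤ s := by simp only [hk]; linarith
      exact_mod_cast h3
  set B : Set (X × ℝ) := {p | p.2 < k p.1} with hB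
  have hBopen : IsOpen B := by
    have : B = (fun p : X × ℝ => p.2 - k p.1) ⁻¹' Iio 0 := by
      ext p; simp [hB, sub_neg]
    rw [this]
    exact (continuous_snd.sub (hkc.comp continuous_fst)).isOpen_preimage _ isOpen_Iio
  have hBconv : Convex ℝ B := by
    have := hkconc.convex_strict_hypograph
    simpa [hB] using this
  have hdisj : Disjoint B {p : X × ℝ | f p.1 ≤ (p.2 : EReal)} := by
    rw [Set.disjoint_left]
    rintro ⟨x, r⟩ h1 h2
    simp only [hB, mem_setOf_eq] at h1 h2
    have : (r : EReal) < (k x : EReal) := by exact_mod_cast h1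
    exact absurd (h2.trans_lt (this.trans_le (hklef x))) (lt_irrefl _)
  obtain ⟨F, u, hFB, hFA⟩ := geometric_hahn_banach_open hBconv hBopen hA hdisj
  set l : X →L[ℝ] ℝ := F.comp (ContinuousLinearMap.inl ℝ X ℝ) with hl
  set c : ℝ := F (0, 1) with hc
  have hF : ∀ (x : X) (r : ℝ), F (x, r) = l x + r * c := by
    intro x r
    have : ((x, r) : X × ℝ) = (x, (0:ℝ)) + r • ((0:X), (1:ℝ)) := by simp
    rw [this, map_add, map_smul, smul_eq_mul]; rfl
  have hAineq : ∀ (x : X) (r : ℝ), f x ≤ (r : EReal) → u ≤ l x + r * c := by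
    intro x r hr; have := hFA (x, r) hr; rwa [hF] at this
  have hBineq : ∀ (x : X) (r : ℝ), r < k x → l x + r * c < u := by
    intro x r hr; have := hFB (x, r) hr; rwa [hF] at this
  -- c ≥ 0
  have hcge : 0 ≤ c := by
    by_contra hcneg
    push_neg at hcneg
    have hbig : ∀ t : ℝ, r₀ ≤ t → u ≤ l w + t * c := by
      intro t ht
      exact hAineq w t (hw ▸ (by exact_mod_cast ht))
    have h2 := hbig (max r₀ ((u - l w - 1) / c)) (le_max_left _ _)
    have h3 : (u - l w - 1) / c ≤ max r₀ ((u - l w - 1) / c) := le_max_right _ _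
    have h4 : max r₀ ((u - l w - 1) / c) * c ≤ (u - l w - 1) / c * c :=
      mul_le_mul_of_nonpos_right h3 hcneg.le
    rw [div_mul_cancel₀ _ (ne_of_lt hcneg)] at h4
    linarith
  -- c ≠ 0
  have hcpos : 0 < c := by
    rcases hcge.eq_or_lt with h | h
    · exfalso
      have hl0 : ∀ x : X, l x ≤ 0 := by
        intro x
        by_contra hlx
        push_neg at hlx
        obtain ⟨n, hn⟩ := exists_nat_ge (u / l x)
        have h1 : l ((n : ℝ) • x) + (k ((n : ℝ) • x) - 1) * c < u :=
          hBineq _ _ (by linarith)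
        rw [← h, mul_zero, add_zero, map_smul, smul_eq_mul] at h1
        have : u / l x * l x ≤ (n : ℝ) * l x := mul_le_mul_of_nonneg_right hn hlx.le
        rw [div_mul_cancel₀ _ (ne_of_gt hlx)] at this
        linarith
      have hlw : l w = 0 := le_antisymm (hl0 w) (by simpa using hl0 (-w))
      have h1 : u ≤ l w + r₀ * c := hAineq w r₀ (le_of_eq hw)
      have h2 : l w + (r₀ - 1) * c < u := hBineq w _ (by simp [hk])
      rw [← h] at h1 h2
      simp [hlw] at h1 h2
      linarith
    · exact h
  -- two one-sided bounds
  have haup : ∀ x : X, l x + k x * c ≤ u := by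
    intro x
    by_contra hlt
    push_neg at hlt
    have hδ : 0 < (l x + k x * c - u) / c := div_pos (by linarith) hcpos
    have h1 : l x + (k x - (l x + k x * c - u) / c) * c < u := hBineq x _ (by linarith)
    have h2 : (l x + k x * c - u) / c * c = l x + k x * c - u := div_mul_cancel₀ _ (ne_of_gt hcpos)
    nlinarith
  have hadown : ∀ x : X, ((( u - l x ) / c : ℝ) : EReal) ≤ f x := by
    intro x
    by_cases hfx : f x = ⊤
    · simp [hfx]
    · have hfr : f x = ((f x).toReal : EReal) := (EReal.coe_toReal hfx (hnb x)).symm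
      set s : ℝ := (f x).toReal
      have h1 : u ≤ l x + s * c := hAineq x s (le_of_eq hfr)
      have h2 : (u - l x) / c ≤ s := by
        rw [div_le_iff₀ hcpos]; linarith
      rw [hfr]
      exact_mod_cast h2
  -- value at w
  have haw : (u - l w) / c = r₀ := by
    have h1 : ((( u - l w ) / c : ℝ) : EReal) ≤ (r₀ : EReal) := hw ▸ hadown w
    have h2 : k w ≤ (u - l w) / c := by
      have := haup w
      rw [le_div_iff₀ hcpos]; linarith
    have h3 : k w = r₀ := by simp [hk]
    have h1' : (u - l w) / c ≤ r₀ := by exact_mod_cast h1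
    linarith
  refine ⟨(-c⁻¹) • l, fun x => ?_, fun x => ?_⟩
  · have key : r₀ + ((-c⁻¹) • l) (x - w) = (u - l x) / c := by
      have : ((-c⁻¹) • l) (x - w) = -c⁻¹ * (l x - l w) := by
        simp [smul_eq_mul, map_sub]; ring
      rw [this, ← haw]
      field_simp
      ring
    rw [key]
    exact hadown x
  · have h1 : k x ≤ (u - l x) / c := by
      have := haup x
      rw [le_div_iff₀ hcpos]; linarith
    have key : r₀ + ((-c⁻¹) • l) (x - w) = (u - l x) / c := by
      have : ((-c⁻¹) • l) (x - w) = -c⁻¹ * (l x - l w) := by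
        simp [smul_eq_mul, map_sub]; ring
      rw [this, ← haw]
      field_simp
      ring
    have h2 : k x ≤ r₀ + ((-c⁻¹) • l) (x - w) := by rw [key]; exact h1
    simp only [hk] at h2
    linarith


theorem convexOn_perturb (y w : X) (q : X →L[ℝ] ℝ) {ε : ℝ} (hε : 0 ≤ ε) :
    ConvexOn ℝ univ (fun x => ‖x - y‖^2/2 - q (x - y) + ε * ‖x - w‖) := by
  refine ⟨convex_univ, ?_⟩
  intro x _ x' _ a b ha hb hab
  have hcomb : ∀ z : X, a • x + b • x' - z = a • (x - z) + b • (x' - z) := by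
    intro z
    have : (a + b) • z = z := by rw [hab, one_smul]
    calc a • x + b • x' - z = a • x + b • x' - (a + b) • z := by rw [this]
    _ = a • (x - z) + b • (x' - z) := by
        rw [add_smul]
        module
  have hn : ∀ z : X, ‖a • x + b • x' - z‖ ≤ a * ‖x - z‖ + b * ‖x' - z‖ := by
    intro z
    rw [hcomb z]
    refine (norm_add_le _ _).trans ?_
    rw [norm_smul, norm_smul, Real.norm_eq_abs, Real.norm_eq_abs, abs_of_nonneg ha,
      abs_of_nonneg hb]
  have hsq : ‖a • x + b • x' - y‖^2 ≤ a * ‖x - y‖^2 + b * ‖x' - y‖^2 := by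
    have h1 : ‖a • x + b • x' - y‖^2 ≤ (a * ‖x - y‖ + b * ‖x' - y‖)^2 := by
      apply pow_le_pow_left₀ (norm_nonneg _) (hn y)
    refine h1.trans ?_
    nlinarith [norm_nonneg (x - y), norm_nonneg (x' - y), sq_nonneg (‖x - y‖ - ‖x' - y‖),
      mul_nonneg ha hb]
  have hq : q (a • x + b • x' - y) = a * q (x - y) + b * q (x' - y) := by
    rw [hcomb y, map_add, map_smul, map_smul, smul_eq_mul, smul_eq_mul]
  have hw := hn w
  have hεw : ε * ‖a • x + b • x' - w‖ ≤ a * (ε * ‖x - w‖) + b * (ε * ‖x' - w‖) := by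
    have := mul_le_mul_of_nonneg_left hw hε
    nlinarith
  simp only [smul_eq_mul]
  nlinarith [hsq]

end Helpers

set_option maxHeartbeats 1000000 in
/-- Rockafellar's theorem: the subdifferential of a proper convex lsc function
is maximal monotone. -/
theorem stmt10 (f : X → EReal) (hproper : EProper f) (hconv : EConvex f)
    (hlsc : LowerSemicontinuous f) (y : X) (q : X →L[ℝ] ℝ)
    (hmon : ∀ x : X, ∀ p ∈ Subdiff f x, (0 : ℝ) ≤ (p - q) (x - y)) :
    q ∈ Subdiff f y := by
  obtain ⟨⟨x₁, hx₁⟩, hnb⟩ := hproper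
  have hA : Convex ℝ {p : X × ℝ | f p.1 ≤ (p.2 : EReal)} := epi_convex hconv
  obtain ⟨l₀, c₀, hminor⟩ := exists_affine_minorant ⟨x₁, hx₁⟩ hnb hconv hlsc
  set h₀ : X → ℝ := fun x => ‖x - y‖^2/2 - q (x - y) with hh₀
  have hh₀c : Continuous h₀ := by
    apply Continuous.sub
    · exact (((continuous_id.sub continuous_const).norm.pow 2).div_const 2)
    · exact q.continuous.comp (continuous_id.sub continuous_const)
  set φ : X → EReal := fun x => f x + ((h₀ x : ℝ) : EReal) with hφ
  have hφlsc : LowerSemicontinuous φ := lsc_add_cont hlsc hh₀c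
  set m : ℝ := c₀ - ‖l₀‖ * ‖y‖ - (‖l₀‖ + ‖q‖)^2/2 with hm
  have hφb : ∀ x, (m : EReal) ≤ φ x := by
    intro x
    have h2 : ‖l₀ x‖ ≤ ‖l₀‖ * ‖x‖ := l₀.le_opNorm x
    have h3 : ‖q (x - y)‖ ≤ ‖q‖ * ‖x - y‖ := q.le_opNorm (x - y)
    rw [Real.norm_eq_abs] at h2 h3
    have h4 : ‖x‖ ≤ ‖x - y‖ + ‖y‖ := by
      calc ‖x‖ = ‖(x - y) + y‖ := by rw [sub_add_cancel]
      _ ≤ ‖x - y‖ + ‖y‖ := norm_add_le _ _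
    have h1 : m ≤ (l₀ x + c₀) + h₀ x := by
      simp only [hh₀, hm]
      have ha2 := abs_le.1 h2
      have ha3 := abs_le.1 h3
      have hnl : 0 ≤ ‖l₀‖ := norm_nonneg _
      have hnq : 0 ≤ ‖q‖ := norm_nonneg _
      have hny : 0 ≤ ‖y‖ := norm_nonneg _
      nlinarith [sq_nonneg (‖x - y‖ - (‖l₀‖ + ‖q‖)), norm_nonneg (x - y)]
    calc (m : EReal) ≤ ((l₀ x + c₀ + h₀ x : ℝ) : EReal) := by exact_mod_cast h1
    _ = ((l₀ x + c₀ : ℝ) : EReal) + ((h₀ x : ℝ) : EReal) := by norm_cast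
    _ ≤ f x + ((h₀ x : ℝ) : EReal) := add_le_add_left (hminor x) _
  have hφx₁ : φ x₁ ≠ ⊤ := (EReal.add_lt_top hx₁ (EReal.coe_ne_top (h₀ x₁))).ne
  -- key per-ε construction
  have key : ∀ ε : ℝ, 0 < ε → ∃ w : X, ‖w - y‖ ≤ ε ∧
      ∀ z : X, f w + ((q (z - w) - 2*ε*‖z - w‖ : ℝ) : EReal) ≤ f z := by
    intro ε hε
    obtain ⟨w, hw1, hw2, hw3⟩ := ekeland_ereal hφlsc hφb hε x₁ hφx₁
    have hfw_ne : f w ≠ ⊤ := by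
      intro htop
      apply hw2
      simp only [hφ, htop, EReal.top_add_coe]
    set r₀ : ℝ := (f w).toReal with hr₀
    have hfw : f w = (r₀ : EReal) := (EReal.coe_toReal hfw_ne (hnb w)).symm
    set h : X → ℝ := fun x => ‖x - y‖^2/2 - q (x - y) + ε * ‖x - w‖ with hhdef
    have hhconv : ConvexOn ℝ univ h := convexOn_perturb y w q hε.le
    have hhc : Continuous h := by
      apply hh₀c.add
      exact continuous_const.mul ((continuous_id.sub continuous_const).norm)
    have hmin : ∀ x, ((r₀ + h w : ℝ) : EReal) ≤ f x + ((h x : ℝ) : EReal) := by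
      intro x
      have hhw : h w = h₀ w := by simp [hhdef, hh₀]
      calc ((r₀ + h w : ℝ) : EReal) = (r₀ : EReal) + ((h₀ w : ℝ) : EReal) := by
            rw [hhw]; norm_cast
      _ = φ w := by simp only [hφ]; rw [hfw]
      _ ≤ φ x + ((ε * dist x w : ℝ) : EReal) := hw3 x
      _ = f x + ((h₀ x : ℝ) : EReal) + ((ε * ‖x - w‖ : ℝ) : EReal) := by
            simp only [hφ]; rw [dist_eq_norm]
      _ = f x + ((h x : ℝ) : EReal) := by
            rw [add_assoc]
            congr 1
    obtain ⟨p, hp1, hp2⟩ := sandwich_subgradient hA hnb hhconv hhc hfw hmin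
    have hpsub : p ∈ Subdiff f w := by
      intro z
      rw [hfw]
      calc (r₀ : EReal) + ((p (z - w) : ℝ) : EReal) = ((r₀ + p (z - w) : ℝ) : EReal) := by
            norm_cast
      _ ≤ f z := hp1 z
    have hmono : 0 ≤ p (w - y) - q (w - y) := by
      have := hmon w p hpsub
      rwa [ContinuousLinearMap.sub_apply] at this
    set v : X := w - y with hv
    -- step 1 : ‖v‖ ≤ ε
    have hvest : ∀ t : ℝ, 0 < t → t ≤ 1 → (2 - t) * ‖v‖^2 / 2 ≤ ε * ‖v‖ := by
      intro t ht0 ht1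
      have h2 := hp2 (w - t • v)
      have e1 : w - t • v - w = -(t • v) := by abel
      have e2 : w - t • v - y = (1 - t) • v := by rw [hv]; module
      have e3 : ‖w - t • v - y‖ = (1 - t) * ‖v‖ := by
        rw [e2, norm_smul, Real.norm_eq_abs, abs_of_nonneg (by linarith)]
      have e4 : ‖w - t • v - w‖ = t * ‖v‖ := by
        rw [e1, norm_neg, norm_smul, Real.norm_eq_abs, abs_of_nonneg ht0.le]
      have e5 : p (w - t • v - w) = -(t * p v) := by
        rw [e1, map_neg, map_smul, smul_eq_mul]
      have e6 : q (w - t • v - y) = (1 - t) * q v := by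
        rw [e2, map_smul, smul_eq_mul]
      have e7 : ‖w - w‖ = 0 := by simp
      simp only [hhdef, e3, e4, e5, e6, e7] at h2
      have e8 : q (w - y) = q v := by rw [hv]
      have e9 : p (w - y) = p v := by rw [hv]
      rw [e8, e9] at hmono
      have h10 : t * ((2 - t) * ‖v‖^2 / 2) ≤ t * (ε * ‖v‖) := by nlinarith [h2, hmono]
      exact le_of_mul_le_mul_left h10 ht0
    have hvε : ‖v‖ ≤ ε := by
      rcases (norm_nonneg v).eq_or_lt with h0 | h0
      · rw [← h0]; exact hε.le
      · have hsq : ‖v‖^2 ≤ ε * ‖v‖ := by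
          by_contra hcon
          push_neg at hcon
          have hδ : ∀ δ : ℝ, 0 < δ → ‖v‖^2 ≤ ε * ‖v‖ + δ := by
            intro δ hδ0
            have hvpos : (0:ℝ) < ‖v‖^2 := by positivity
            have htpos : 0 < min 1 (2*δ/‖v‖^2) := lt_min one_pos (by positivity)
            have ht := hvest _ htpos (min_le_left _ _)
            have h1 : min 1 (2*δ/‖v‖^2) * ‖v‖^2 ≤ 2*δ := by
              have h2 := min_le_right 1 (2*δ/‖v‖^2)
              have h3 := mul_le_mul_of_nonneg_right h2 (le_of_lt hvpos)
              rwa [div_mul_cancel₀ _ (ne_of_gt hvpos)] at h3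
            nlinarith [ht]
          linarith [hδ ((‖v‖^2 - ε*‖v‖)/2) (by linarith)]
        have : ‖v‖ * ‖v‖ ≤ ε * ‖v‖ := by nlinarith [hsq]
        exact le_of_mul_le_mul_right this h0
    -- step 2 : (p - q) u ≤ 2 ε ‖u‖
    have hpq : ∀ u : X, p u - q u ≤ 2*ε*‖u‖ := by
      intro u
      rcases (norm_nonneg u).eq_or_lt with h0 | h0
      · have hu0 : u = 0 := by rwa [eq_comm, norm_eq_zero] at h0
        simp [hu0]
      · have hb : ∀ t : ℝ, 0 < t → p u - q u ≤ ‖v‖*‖u‖ + t*‖u‖^2/2 + ε*‖u‖ := by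
          intro t ht
          have h2 := hp2 (w - t • u)
          have e1 : w - t • u - w = -(t • u) := by abel
          have e2 : w - t • u - y = v - t • u := by rw [hv]; abel
          have e5 : p (w - t • u - w) = -(t * p u) := by
            rw [e1, map_neg, map_smul, smul_eq_mul]
          have e6 : q (w - t • u - y) = q v - t * q u := by
            rw [e2, map_sub, map_smul, smul_eq_mul]
          have e4 : ‖w - t • u - w‖ = t * ‖u‖ := by
            rw [e1, norm_neg, norm_smul, Real.norm_eq_abs, abs_of_nonneg ht.le]
          have e3 : ‖w - t • u - y‖ ≤ ‖v‖ + t * ‖u‖ := by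
            rw [e2]
            refine (norm_sub_le _ _).trans ?_
            rw [norm_smul, Real.norm_eq_abs, abs_of_nonneg ht.le]
          have e3' : ‖w - t • u - y‖^2 ≤ (‖v‖ + t * ‖u‖)^2 :=
            pow_le_pow_left₀ (norm_nonneg _) e3 2
          have e7 : ‖w - w‖ = 0 := by simp
          have e8 : q (w - y) = q v := by rw [hv]
          simp only [hhdef, e4, e5, e6, e7, e8] at h2
          have e9 : ‖w - y‖ = ‖v‖ := by rw [hv]
          rw [e9] at h2
          have h10 : t * (p u - q u) ≤ t * (‖v‖*‖u‖ + t*‖u‖^2/2 + ε*‖u‖) := by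
            nlinarith [h2, e3']
          exact le_of_mul_le_mul_left h10 ht
        have hlim : ∀ δ : ℝ, 0 < δ → p u - q u ≤ ‖v‖*‖u‖ + ε*‖u‖ + δ := by
          intro δ hδ0
          have := hb (2*δ/‖u‖^2) (by positivity)
          have h1 : 2*δ/‖u‖^2 * ‖u‖^2 = 2*δ := div_mul_cancel₀ _ (by positivity)
          nlinarith [this]
        have h1 : p u - q u ≤ ‖v‖*‖u‖ + ε*‖u‖ := by
          by_contra hcon
          push_neg at hcon
          linarith [hlim ((p u - q u - (‖v‖*‖u‖ + ε*‖u‖))/2) (by linarith)]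
        have h2 : ‖v‖*‖u‖ ≤ ε*‖u‖ := mul_le_mul_of_nonneg_right hvε (norm_nonneg u)
        linarith
    refine ⟨w, hvε, fun z => ?_⟩
    have h1 : q (z - w) - 2*ε*‖z - w‖ ≤ p (z - w) := by
      have h2 := hpq (w - z)
      have e1 : p (w - z) = -(p (z - w)) := by rw [← map_neg]; congr 1; abel
      have e2 : q (w - z) = -(q (z - w)) := by rw [← map_neg]; congr 1; abel
      have e3 : ‖w - z‖ = ‖z - w‖ := norm_sub_rev _ _
      rw [e1, e2, e3] at h2
      linarith
    calc f w + ((q (z - w) - 2*ε*‖z - w‖ : ℝ) : EReal)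
        ≤ f w + ((p (z - w) : ℝ) : EReal) := add_le_add_right (by exact_mod_cast h1) _
    _ ≤ f z := hpsub z
  -- final assembly
  intro z
  by_cases hfz : f z = ⊤
  · rw [hfz]; exact le_top
  have H : ∀ c : ℝ, (c : EReal) < f y → ((c + q (z - y) : ℝ) : EReal) ≤ f z := by
    intro c hc
    obtain ⟨δ, hδ0, hδ⟩ := Metric.eventually_nhds_iff.1 (hlsc y (c : EReal) hc)
    have Hη : ∀ η : ℝ, 0 < η → ((c + q (z - y) - η : ℝ) : EReal) ≤ f z := by
      intro η hη
      set K : ℝ := ‖q‖ + 2*(‖z - y‖ + 1) + 1 with hK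
      have hK0 : (0:ℝ) < K := by positivity
      set ε : ℝ := min (δ/2) (min 1 (η/K)) with hεdef
      have hε0 : 0 < ε := lt_min (by linarith) (lt_min one_pos (div_pos hη hK0))
      obtain ⟨w, hw1, hw2⟩ := key ε hε0
      have hwy : dist w y < δ := by
        rw [dist_eq_norm]
        calc ‖w - y‖ ≤ ε := hw1
        _ ≤ δ/2 := min_le_left _ _
        _ < δ := by linarith
      have hcw : (c : EReal) < f w := hδ hwy
      have h2 := hw2 z
      have hq1 : ‖q (w - y)‖ ≤ ‖q‖ * ‖w - y‖ := q.le_opNorm _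
      rw [Real.norm_eq_abs] at hq1
      have hzw : ‖z - w‖ ≤ ‖z - y‖ + ε := by
        calc ‖z - w‖ = ‖(z - y) - (w - y)‖ := by congr 1; abel
        _ ≤ ‖z - y‖ + ‖w - y‖ := norm_sub_le _ _
        _ ≤ ‖z - y‖ + ε := by linarith
      have hqzw : q (z - w) = q (z - y) - q (w - y) := by
        rw [← map_sub]; congr 1; abel
      have hreal : c + q (z - y) - η ≤ c + (q (z - w) - 2*ε*‖z - w‖) := by
        have hε1 : ε ≤ 1 := le_trans (min_le_right _ _) (min_le_left _ _)
        have hεη : ε * K ≤ η := by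
          have h3 : ε ≤ η/K := le_trans (min_le_right _ _) (min_le_right _ _)
          rwa [le_div_iff₀ hK0] at h3
        have ha := abs_le.1 hq1
        have hnq : (0:ℝ) ≤ ‖q‖ := norm_nonneg _
        have hnzw : (0:ℝ) ≤ ‖z - w‖ := norm_nonneg _
        rw [hqzw]
        have m1 : ‖q‖ * ‖w - y‖ ≤ ‖q‖ * ε := mul_le_mul_of_nonneg_left hw1 hnq
        have m2 : 2*ε*‖z - w‖ ≤ 2*ε*(‖z - y‖ + ε) :=
          mul_le_mul_of_nonneg_left hzw (by linarith)
        have m3 : 2*ε*(‖z - y‖ + ε) ≤ 2*ε*(‖z - y‖ + 1) :=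
          mul_le_mul_of_nonneg_left (by linarith) (by linarith)
        have m4 : ε * K = ‖q‖*ε + 2*ε*(‖z - y‖ + 1) + ε := by rw [hK]; ring
        linarith
      calc ((c + q (z - y) - η : ℝ) : EReal)
          ≤ ((c + (q (z - w) - 2*ε*‖z - w‖) : ℝ) : EReal) := by exact_mod_cast hreal
      _ = (c : EReal) + ((q (z - w) - 2*ε*‖z - w‖ : ℝ) : EReal) := by norm_cast
      _ ≤ f w + ((q (z - w) - 2*ε*‖z - w‖ : ℝ) : EReal) := add_le_add_left hcw.le _
      _ ≤ f z := h2
    have hfzr : f z = ((f z).toReal : EReal) := (EReal.coe_toReal hfz (hnb z)).symm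
    rw [hfzr]
    have hreal : ∀ η : ℝ, 0 < η → c + q (z - y) ≤ (f z).toReal + η := by
      intro η hη
      have h3 := Hη η hη
      rw [hfzr] at h3
      have h4 := EReal.coe_le_coe_iff.1 h3
      linarith
    exact_mod_cast le_of_forall_pos_le_add hreal
  rcases eq_or_ne (f y) ⊤ with hfy | hfy
  · exfalso
    have hfzr : f z = ((f z).toReal : EReal) := (EReal.coe_toReal hfz (hnb z)).symm
    have h3 := H ((f z).toReal - q (z - y) + 1) (by rw [hfy]; exact EReal.coe_lt_top _)
    rw [hfzr] at h3
    have h4 := EReal.coe_le_coe_iff.1 h3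
    simp only [EReal.toReal_coe] at h4
    linarith
  have hfyr : f y = ((f y).toReal : EReal) := (EReal.coe_toReal hfy (hnb y)).symm
  have hfzr : f z = ((f z).toReal : EReal) := (EReal.coe_toReal hfz (hnb z)).symm
  rw [hfyr, hfzr]
  have hreal : ∀ η : ℝ, 0 < η → (f y).toReal + q (z - y) ≤ (f z).toReal + η := by
    intro η hη
    have h3 := H ((f y).toReal - η) (by
      rw [hfyr]
      exact_mod_cast (by linarith : (f y).toReal - η < (f y).toReal))
    rw [hfzr] at h3
    have h4 := EReal.coe_le_coe_iff.1 h3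
    linarith
  have := le_of_forall_pos_le_add hreal
  calc ((f y).toReal : EReal) + ((q (z - y) : ℝ) : EReal)
      = (((f y).toReal + q (z - y) : ℝ) : EReal) := by norm_cast
  _ ≤ ((f z).toReal : EReal) := by exact_mod_cast this
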